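/- arXiv:1302.1262 — 3 statements merged into one kernel-verified Lean document; each statement's English description precedes it below -/
import Mathlib

section
/- The convolution generated by L has no annihilators: if f ∈ L_2(0,b) satisfies (g ∗ f)(x) = 0 for all g ∈ W^1_2[0,b], then f = 0 identically. -/
open MeasureTheory Filter Set intervalIntegral

noncomputable section

/-- Membership in the Sobolev space `W¹₂[0,b]`: differentiable with `f` and `f'` in `L₂(0,b)`. -/
def MemW12 (b : ℝ) (f : ℝ → ℂ) : Prop :=
  (∀ x : ℝ, DifferentiableAt ℝ f x) ∧
    MemLp f 2 (volume.restrict (Set.Ioc (0:ℝ) b)) ∧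
    MemLp (deriv f) 2 (volume.restrict (Set.Ioc (0:ℝ) b))

/-- Membership in `L₂(0,b)`. -/
def MemL2 (b : ℝ) (f : ℝ → ℂ) : Prop :=
  MemLp f 2 (volume.restrict (Set.Ioc (0:ℝ) b))

/-- The boundary form `U(y) = y(0) - ∫₀ᵇ (-i y'(x)) conj(σ(x)) dx`. -/
def Ubc (b : ℝ) (σ y : ℝ → ℂ) : ℂ :=
  y 0 - ∫ x in (0:ℝ)..b, (-Complex.I * deriv y x) * (starRingEnd ℂ) (σ x)

/-- The characteristic entire function `Δ(λ) = 1 - λ ∫₀ᵇ e^{iλx} conj(σ(x)) dx`. -/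
def Delta (b : ℝ) (σ : ℝ → ℂ) (l : ℂ) : ℂ :=
  1 - l * ∫ x in (0:ℝ)..b, Complex.exp (Complex.I * l * (x:ℂ)) * (starRingEnd ℂ) (σ x)

/-- The convolution generated by the operator `L`:
`(g ∗ f)(x) = i ∫₀ˣ g(x-ξ)f(ξ)dξ - ∫₀ᵇ conj(σ(μ)) ∂/∂μ (∫_μˣ g(x-ξ+μ)f(ξ)dξ) dμ`. -/
def conv (b : ℝ) (σ g f : ℝ → ℂ) (x : ℝ) : ℂ :=
  Complex.I * (∫ ξ in (0:ℝ)..x, g (x - ξ) * f ξ) -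
    ∫ μ in (0:ℝ)..b, (starRingEnd ℂ) (σ μ) *
      deriv (fun t : ℝ => ∫ ξ in t..x, g (x - ξ + t) * f ξ) μ

/-- `λₙ` is a zero of `Δ` of multiplicity exactly `m`. -/
def IsZeroOfOrder (b : ℝ) (σ : ℝ → ℂ) (lam : ℂ) (m : ℕ) : Prop :=
  (∀ j < m, iteratedDeriv j (Delta b σ) lam = 0) ∧ iteratedDeriv m (Delta b σ) lam ≠ 0

/-- `d j` are the Taylor coefficients at `λₙ` of `(λ-λₙ)^m / Δ(λ)`. -/
def IsTaylorCoeffs (b : ℝ) (σ : ℝ → ℂ) (lam : ℂ) (m : ℕ) (d : ℕ → ℂ) : Prop :=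
  ∃ F : ℂ → ℂ, AnalyticAt ℂ F lam ∧
    (∀ᶠ l in nhdsWithin lam {lam}ᶜ, F l = (l - lam) ^ m / Delta b σ l) ∧
    ∀ j, d j = iteratedDeriv j F lam / (Nat.factorial j : ℂ)

/-- The root functions `u_{s,n}(x) = Σ_{j=0}^s (d_j/j!) ((ix)^{s-j}/(s-j)!) e^{iλₙx}`. -/
def rootFun (lam : ℂ) (d : ℕ → ℂ) (s : ℕ) (x : ℝ) : ℂ :=
  ∑ j ∈ Finset.range (s + 1), d j / (Nat.factorial j : ℂ) *
    ((Complex.I * (x:ℂ)) ^ (s - j) / (Nat.factorial (s - j) : ℂ)) *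
      Complex.exp (Complex.I * lam * (x:ℂ))

/-- The coefficient functionals
`C_{k,n}(f) = -i U_μ{ ∫₀^μ f(ξ) ((i(μ-ξ))^k/k!) e^{iλₙ(μ-ξ)} dξ }`. -/
def coefF (b : ℝ) (σ : ℝ → ℂ) (lam : ℂ) (k : ℕ) (f : ℝ → ℂ) : ℂ :=
  -Complex.I * Ubc b σ (fun μ => ∫ ξ in (0:ℝ)..μ, f ξ *
    ((Complex.I * ((μ:ℂ) - (ξ:ℂ))) ^ k / (Nat.factorial k : ℂ)) *
      Complex.exp (Complex.I * lam * ((μ:ℂ) - (ξ:ℂ))))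

/-- the convolution has no annihilators: if `g ∗ f = 0` for all `g ∈ W¹₂[0,b]`,
then `f = 0` (as an element of `L₂(0,b)`). -/
theorem statement8 (b : ℝ) (hb : 0 < b) (σ : ℝ → ℂ) (hσ : MemL2 b σ)
    (f : ℝ → ℂ) (hf : MemL2 b f)
    (h0 : ∀ g : ℝ → ℂ, MemW12 b g → ∀ x ∈ Set.Icc (0:ℝ) b, conv b σ g f x = 0) :
    ∀ᵐ x ∂(volume.restrict (Set.Ioc (0:ℝ) b)), f x = 0 := by
  -- f is integrable on (0, b]
  have hfi : IntegrableOn f (Set.Ioc (0:ℝ) b) volume := by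
    have := hf.integrable (by norm_num : (1:ENNReal) ≤ 2)
    exact this
  -- interval integrability within [0, b]
  have hII : ∀ u v : ℝ, 0 ≤ u → u ≤ b → 0 ≤ v → v ≤ b →
      IntervalIntegrable f volume u v := by
    intro u v hu hub hv hvb
    rw [intervalIntegrable_iff]
    refine hfi.mono_set ?_
    intro y hy
    rw [Set.mem_uIoc] at hy
    rcases hy with ⟨h1, h2⟩ | ⟨h1, h2⟩
    · exact ⟨lt_of_le_of_lt hu h1, le_trans h2 hvb⟩
    · exact ⟨lt_of_le_of_lt hv h1, le_trans h2 hub⟩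
  -- the constant function 1 is in W¹₂
  have hg1 : MemW12 b (fun _ : ℝ => (1:ℂ)) := by
    refine ⟨fun x => differentiableAt_const 1, memLp_const 1, ?_⟩
    simp only [deriv_const']
    exact memLp_const 0
  -- almost every point is not b
  have haeb : ∀ᵐ x : ℝ ∂volume, x ≠ b := by simp [ae_iff]
  -- Step 1: from the hypothesis with g = 1, we get ∫₀ˣ f = 0 for all x ∈ [0, b]
  have key : ∀ x ∈ Set.Icc (0:ℝ) b, (∫ ξ in (0:ℝ)..x, f ξ) = 0 := by
    intro x hx
    obtain ⟨hx0, hxb⟩ := hx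
    have hcx := h0 (fun _ => 1) hg1 x ⟨hx0, hxb⟩
    have hc0 := h0 (fun _ => 1) hg1 0 ⟨le_refl 0, hb.le⟩
    simp only [conv, one_mul] at hcx hc0
    -- the derivative terms at x and at 0 coincide on (0, b)
    have hder : ∀ μ ∈ Set.Ioo (0:ℝ) b,
        deriv (fun t : ℝ => ∫ ξ in t..x, f ξ) μ = deriv (fun t : ℝ => ∫ ξ in t..0, f ξ) μ := by
      intro μ hμ
      have hev : (fun t : ℝ => ∫ ξ in t..x, f ξ) =ᶠ[nhds μ]
          (fun t : ℝ => (∫ ξ in t..0, f ξ) + ∫ ξ in (0:ℝ)..x, f ξ) := by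
        filter_upwards [isOpen_Ioo.mem_nhds hμ] with t ht
        exact (intervalIntegral.integral_add_adjacent_intervals
          (hII t 0 ht.1.le (le_trans ht.2.le (le_refl b)) (le_refl 0) hb.le)
          (hII 0 x (le_refl 0) hb.le hx0 hxb)).symm
      rw [hev.deriv_eq]
      exact deriv_add_const _
    have hSeq : (∫ μ in (0:ℝ)..b, (starRingEnd ℂ) (σ μ) *
          deriv (fun t : ℝ => ∫ ξ in t..x, f ξ) μ)
        = ∫ μ in (0:ℝ)..b, (starRingEnd ℂ) (σ μ) *
          deriv (fun t : ℝ => ∫ ξ in t..0, f ξ) μ := by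
      apply intervalIntegral.integral_congr_ae
      filter_upwards [haeb] with μ hμb hμ
      rw [Set.uIoc_of_le hb.le] at hμ
      rw [hder μ ⟨hμ.1, lt_of_le_of_ne hμ.2 hμb⟩]
    rw [intervalIntegral.integral_same] at hc0
    rw [hSeq] at hcx
    have : Complex.I * ∫ ξ in (0:ℝ)..x, f ξ = 0 := by
      have := sub_eq_zero.mpr (hcx.trans hc0.symm)
      simpa using this
    have hI : (Complex.I : ℂ) ≠ 0 := Complex.I_ne_zero
    rcases mul_eq_zero.mp this with h | h
    · exact absurd h hI
    · exact h
  -- Step 2: Lebesgue differentiation for the indicator extension of f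
  set g₀ : ℝ → ℂ := (Set.Ioc (0:ℝ) b).indicator f with hg₀def
  have hg₀int : Integrable g₀ volume := hfi.integrable_indicator measurableSet_Ioc
  have hld := IsUnifLocDoublingMeasure.ae_tendsto_average (μ := volume)
    hg₀int.locallyIntegrable 1
  rw [ae_restrict_iff' measurableSet_Ioc]
  filter_upwards [hld, haeb] with x hx hxb hxmem
  have hxo : x ∈ Set.Ioo (0:ℝ) b := ⟨hxmem.1, lt_of_le_of_ne hxmem.2 hxb⟩
  -- the averages over closed balls around x
  have htend : Filter.Tendsto (fun r : ℝ => ⨍ y in Metric.closedBall x r, g₀ y)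
      (nhdsWithin 0 (Set.Ioi 0)) (nhds (g₀ x)) := by
    refine hx (fun _ => x) id tendsto_id ?_
    filter_upwards [self_mem_nhdsWithin] with r hr
    exact Metric.mem_closedBall_self (by simpa using (le_of_lt hr))
  -- the averages vanish for small radii
  set ε : ℝ := min x (b - x) with hε
  have hεpos : 0 < ε := lt_min hxo.1 (by linarith [hxo.2])
  have hev0 : ∀ᶠ r in nhdsWithin (0:ℝ) (Set.Ioi 0),
      (⨍ y in Metric.closedBall x r, g₀ y) = 0 := by
    filter_upwards [Ioo_mem_nhdsGT_of_mem (Set.left_mem_Ico.mpr hεpos)] with r hr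
    obtain ⟨hr0, hrε⟩ := hr
    have hrx : r < x := lt_of_lt_of_le hrε (min_le_left _ _)
    have hrbx : r < b - x := lt_of_lt_of_le hrε (min_le_right _ _)
    have hsub : Set.Icc (x - r) (x + r) ⊆ Set.Ioc (0:ℝ) b := by
      intro y hy
      exact ⟨by linarith [hy.1], by linarith [hy.2]⟩
    have hint0 : (∫ y in Metric.closedBall x r, g₀ y) = 0 := by
      rw [Real.closedBall_eq_Icc]
      have h1 : (∫ y in Set.Icc (x - r) (x + r), g₀ y) = ∫ y in Set.Icc (x - r) (x + r), f y :=
        setIntegral_congr_fun measurableSet_Icc fun y hy => Set.indicator_of_mem (hsub hy) f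
      rw [h1, integral_Icc_eq_integral_Ioc,
        ← intervalIntegral.integral_of_le (by linarith : x - r ≤ x + r)]
      have hadj := intervalIntegral.integral_add_adjacent_intervals
        (hII (x - r) 0 (by linarith) (by linarith) (le_refl 0) hb.le)
        (hII 0 (x + r) (le_refl 0) hb.le (by linarith) (by linarith))
      rw [← hadj, intervalIntegral.integral_symm,
        key (x - r) ⟨by linarith, by linarith⟩, key (x + r) ⟨by linarith, by linarith⟩]
      simp
    rw [setAverage_eq, hint0, smul_zero]
  have : g₀ x = 0 :=
    tendsto_nhds_unique htend (tendsto_const_nhds.congr'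
      (by filter_upwards [hev0] with r h using h.symm))
  rwa [hg₀def, Set.indicator_of_mem hxmem] at this
end
end

section
/- For arbitrary λ ≠ β, the convolution of exponentials satisfies e^{iλx} ∗ e^{iβx} = (e^{iβx} Δ(λ) - e^{iλx} Δ(β)) / (β - λ). -/
open MeasureTheory Filter Set intervalIntegral

noncomputable section

/-- for `λ ≠ β`,
`e^{iλx} ∗ e^{iβx} = (e^{iβx} Δ(λ) - e^{iλx} Δ(β)) / (β - λ)`. -/
theorem statement10 (b : ℝ) (hb : 0 < b) (σ : ℝ → ℂ) (hσ : MemL2 b σ)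
    (l β : ℂ) (hlb : l ≠ β) :
    ∀ x : ℝ, conv b σ (fun t : ℝ => Complex.exp (Complex.I * l * (t:ℂ)))
        (fun t : ℝ => Complex.exp (Complex.I * β * (t:ℂ))) x =
      (Complex.exp (Complex.I * β * (x:ℂ)) * Delta b σ l -
        Complex.exp (Complex.I * l * (x:ℂ)) * Delta b σ β) / (β - l) := by
  intro x
  have hβl : β - l ≠ 0 := sub_ne_zero_of_ne (Ne.symm hlb)
  have hIβl : Complex.I * (β - l) ≠ 0 := mul_ne_zero Complex.I_ne_zero hβl
  have key : ∀ t : ℝ, (∫ ξ in t..x, Complex.exp (Complex.I * l * ((x - ξ + t : ℝ) : ℂ)) *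
      Complex.exp (Complex.I * β * (ξ:ℂ))) =
      (Complex.exp (Complex.I * β * (x:ℂ)) * Complex.exp (Complex.I * l * (t:ℂ)) -
       Complex.exp (Complex.I * l * (x:ℂ)) * Complex.exp (Complex.I * β * (t:ℂ))) /
        (Complex.I * (β - l)) := by
    intro t
    have h1 : ∀ ξ : ℝ, Complex.exp (Complex.I * l * ((x - ξ + t : ℝ) : ℂ)) *
        Complex.exp (Complex.I * β * (ξ:ℂ)) =
        Complex.exp (Complex.I * l * ((x:ℂ) + (t:ℂ))) *
          Complex.exp ((Complex.I * (β - l)) * (ξ:ℂ)) := by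
      intro ξ
      rw [← Complex.exp_add, ← Complex.exp_add]
      congr 1
      push_cast
      ring
    simp_rw [h1]
    rw [intervalIntegral.integral_const_mul, integral_exp_mul_complex hIβl, ← mul_div_assoc]
    have e1 : Complex.I * l * ((x:ℂ) + (t:ℂ)) + Complex.I * (β - l) * (x:ℂ) =
        Complex.I * β * (x:ℂ) + Complex.I * l * (t:ℂ) := by ring
    have e2 : Complex.I * l * ((x:ℂ) + (t:ℂ)) + Complex.I * (β - l) * (t:ℂ) =
        Complex.I * l * (x:ℂ) + Complex.I * β * (t:ℂ) := by ring
    rw [mul_sub, ← Complex.exp_add, ← Complex.exp_add, e1, e2, Complex.exp_add, Complex.exp_add]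
  have hE : ∀ (c : ℂ) (μ : ℝ), HasDerivAt (fun t : ℝ => Complex.exp (Complex.I * c * (t:ℂ)))
      (Complex.I * c * Complex.exp (Complex.I * c * (μ:ℂ))) μ := by
    intro c μ
    have h0 : HasDerivAt (fun z : ℂ => Complex.exp (Complex.I * c * z))
        (Complex.I * c * Complex.exp (Complex.I * c * (μ:ℂ))) (μ:ℂ) := by
      have := ((hasDerivAt_id ((μ:ℂ))).const_mul (Complex.I * c)).cexp
      simpa [mul_comm] using this
    exact h0.comp_ofReal
  have hderiv : ∀ μ : ℝ, deriv (fun t : ℝ => ∫ ξ in t..x,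
      Complex.exp (Complex.I * l * ((x - ξ + t : ℝ) : ℂ)) *
        Complex.exp (Complex.I * β * (ξ:ℂ))) μ =
      (l * Complex.exp (Complex.I * β * (x:ℂ)) / (β - l)) * Complex.exp (Complex.I * l * (μ:ℂ)) -
      (β * Complex.exp (Complex.I * l * (x:ℂ)) / (β - l)) * Complex.exp (Complex.I * β * (μ:ℂ)) := by
    intro μ
    have hfun : (fun t : ℝ => ∫ ξ in t..x,
        Complex.exp (Complex.I * l * ((x - ξ + t : ℝ) : ℂ)) *
          Complex.exp (Complex.I * β * (ξ:ℂ))) = fun t : ℝ =>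
        (Complex.exp (Complex.I * β * (x:ℂ)) * Complex.exp (Complex.I * l * (t:ℂ)) -
         Complex.exp (Complex.I * l * (x:ℂ)) * Complex.exp (Complex.I * β * (t:ℂ))) /
          (Complex.I * (β - l)) := funext key
    rw [hfun]
    have hD := (((hE l μ).const_mul (Complex.exp (Complex.I * β * (x:ℂ)))).sub
      ((hE β μ).const_mul (Complex.exp (Complex.I * l * (x:ℂ))))).div_const (Complex.I * (β - l))
    have hD' : HasDerivAt (fun t : ℝ =>
        (Complex.exp (Complex.I * β * (x:ℂ)) * Complex.exp (Complex.I * l * (t:ℂ)) -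
         Complex.exp (Complex.I * l * (x:ℂ)) * Complex.exp (Complex.I * β * (t:ℂ))) /
          (Complex.I * (β - l))) _ μ := hD
    rw [hD'.deriv]
    field_simp
  have hσi : IntervalIntegrable (fun μ : ℝ => (starRingEnd ℂ) (σ μ)) volume 0 b := by
    haveI : Fact (volume (Set.Ioc (0:ℝ) b) < ⊤) := ⟨measure_Ioc_lt_top⟩
    have h1 : Integrable σ (volume.restrict (Set.Ioc (0:ℝ) b)) := hσ.integrable one_le_two
    rw [intervalIntegrable_iff_integrableOn_Ioc_of_le hb.le]
    refine (Integrable.mono' h1.norm ?_ ?_)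
    · exact (Complex.continuous_conj.comp_aestronglyMeasurable h1.aestronglyMeasurable)
    · filter_upwards with a
      simp
  have hint : ∀ c : ℂ, IntervalIntegrable
      (fun μ : ℝ => Complex.exp (Complex.I * c * (μ:ℂ)) * (starRingEnd ℂ) (σ μ)) volume 0 b := by
    intro c
    exact hσi.continuousOn_mul (Continuous.continuousOn (by fun_prop))
  have key0 := key 0
  simp only [add_zero, Complex.ofReal_zero, mul_zero, Complex.exp_zero, mul_one] at key0
  simp only [conv]
  simp only [hderiv]
  rw [key0]
  rw [intervalIntegral.integral_congr
    (g := fun μ : ℝ => (l * Complex.exp (Complex.I * β * (x:ℂ)) / (β - l)) *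
      (Complex.exp (Complex.I * l * (μ:ℂ)) * (starRingEnd ℂ) (σ μ)) -
      (β * Complex.exp (Complex.I * l * (x:ℂ)) / (β - l)) *
      (Complex.exp (Complex.I * β * (μ:ℂ)) * (starRingEnd ℂ) (σ μ))) (fun μ _ => by ring)]
  rw [intervalIntegral.integral_sub ((hint l).const_mul _) ((hint β).const_mul _),
    intervalIntegral.integral_const_mul, intervalIntegral.integral_const_mul]
  simp only [Delta]
  set S1 := ∫ μ in (0:ℝ)..b, Complex.exp (Complex.I * l * (μ:ℂ)) * (starRingEnd ℂ) (σ μ)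
  set S2 := ∫ μ in (0:ℝ)..b, Complex.exp (Complex.I * β * (μ:ℂ)) * (starRingEnd ℂ) (σ μ)
  field_simp
  ring
end
end

section
/- For the partial sum S_R(f;x) = -(1/2πi) ∮_{|λ|=R} (L-λI)^{-1} f dλ applied to f(x) = e^{iμx}, the remainder satisfies Q_R(e^{iμ·};x) := S_R(e^{iμ·};x) - e^{iμx} = (Δ(μ)/2πi) ∮_{|λ|=R} (e^{iλx}/Δ(λ)) · dλ/(μ - λ), valid for any μ with |μ| < R. -/
open MeasureTheory Filter Set intervalIntegral

noncomputable section

namespace St17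

lemma hasDerivAt_cexp_mul (c : ℂ) (t : ℝ) :
    HasDerivAt (fun s : ℝ => Complex.exp (c * (s:ℂ))) (c * Complex.exp (c * (t:ℂ))) t := by
  have h : HasDerivAt (fun y : ℝ => Complex.exp (c * (y:ℂ))) (Complex.exp (c * (t:ℂ)) * c) t := by
    apply (Complex.hasDerivAt_exp _).comp t
    simpa only [mul_one, id_eq] using ((hasDerivAt_id ((t : ℝ) : ℂ)).const_mul c).comp_ofReal
  simpa [mul_comm] using h

lemma cexp_cont (c : ℂ) : Continuous (fun s : ℝ => Complex.exp (c * (s:ℂ))) :=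
  Complex.continuous_exp.comp (continuous_const.mul Complex.continuous_ofReal)

lemma conv_eval (b : ℝ) (σ : ℝ → ℂ)
    (hσi : IntervalIntegrable (fun s => (starRingEnd ℂ) (σ s)) volume 0 b)
    (l μ : ℂ) (hD : Delta b σ l ≠ 0) (hne : μ ≠ l) (x : ℝ) :
    conv b σ (fun t : ℝ => Complex.exp (Complex.I * l * (t:ℂ)) / Delta b σ l)
      (fun t : ℝ => Complex.exp (Complex.I * μ * (t:ℂ))) x =
    Complex.exp (Complex.I * μ * (x:ℂ)) * (μ - l)⁻¹ -
      Delta b σ μ * (Complex.exp (Complex.I * l * (x:ℂ)) / Delta b σ l / (μ - l)) := by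
  have hμl : μ - l ≠ 0 := sub_ne_zero.mpr hne
  have hI : Complex.I * (μ - l) ≠ 0 := mul_ne_zero Complex.I_ne_zero hμl
  -- closed form of inner integral
  have hint : ∀ t : ℝ, (∫ ξ in t..x, Complex.exp (Complex.I * l * ((x - ξ + t : ℝ):ℂ)) / Delta b σ l *
      Complex.exp (Complex.I * μ * (ξ:ℂ))) =
      Complex.exp (Complex.I * l * ((x:ℂ) + (t:ℂ))) / Delta b σ l *
        ((Complex.exp (Complex.I * (μ - l) * (x:ℂ)) - Complex.exp (Complex.I * (μ - l) * (t:ℂ))) /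
          (Complex.I * (μ - l))) := by
    intro t
    have hpt : ∀ ξ : ℝ, Complex.exp (Complex.I * l * ((x - ξ + t : ℝ):ℂ)) / Delta b σ l *
        Complex.exp (Complex.I * μ * (ξ:ℂ)) =
        (Complex.exp (Complex.I * l * ((x:ℂ) + (t:ℂ))) / Delta b σ l) *
          Complex.exp (Complex.I * (μ - l) * (ξ:ℂ)) := by
      intro ξ
      rw [div_mul_eq_mul_div, div_mul_eq_mul_div, ← Complex.exp_add, ← Complex.exp_add]
      congr 2
      push_cast
      ring
    rw [intervalIntegral.integral_congr (fun ξ _ => hpt ξ),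
      intervalIntegral.integral_const_mul, integral_exp_mul_complex hI]
  -- closed form of first integral
  have hT1 : (∫ ξ in (0:ℝ)..x, Complex.exp (Complex.I * l * ((x - ξ : ℝ):ℂ)) / Delta b σ l *
      Complex.exp (Complex.I * μ * (ξ:ℂ))) =
      Complex.exp (Complex.I * l * (x:ℂ)) / Delta b σ l *
        ((Complex.exp (Complex.I * (μ - l) * (x:ℂ)) - 1) / (Complex.I * (μ - l))) := by
    have hpt : ∀ ξ : ℝ, Complex.exp (Complex.I * l * ((x - ξ : ℝ):ℂ)) / Delta b σ l *
        Complex.exp (Complex.I * μ * (ξ:ℂ)) =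
        (Complex.exp (Complex.I * l * (x:ℂ)) / Delta b σ l) *
          Complex.exp (Complex.I * (μ - l) * (ξ:ℂ)) := by
      intro ξ
      rw [div_mul_eq_mul_div, div_mul_eq_mul_div, ← Complex.exp_add, ← Complex.exp_add]
      congr 2
      push_cast
      ring
    rw [intervalIntegral.integral_congr (fun ξ _ => hpt ξ),
      intervalIntegral.integral_const_mul, integral_exp_mul_complex hI]
    norm_num
  -- rewrite inner closed form as A·e^{ilt} - B·e^{iμt}
  have hG : ∀ t : ℝ, Complex.exp (Complex.I * l * ((x:ℂ) + (t:ℂ))) / Delta b σ l *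
        ((Complex.exp (Complex.I * (μ - l) * (x:ℂ)) - Complex.exp (Complex.I * (μ - l) * (t:ℂ))) /
          (Complex.I * (μ - l))) =
      Complex.exp (Complex.I * l * (t:ℂ)) *
        (Complex.exp (Complex.I * l * (x:ℂ)) * Complex.exp (Complex.I * (μ - l) * (x:ℂ)) /
          (Delta b σ l * (Complex.I * (μ - l)))) -
      Complex.exp (Complex.I * μ * (t:ℂ)) *
        (Complex.exp (Complex.I * l * (x:ℂ)) / (Delta b σ l * (Complex.I * (μ - l)))) := by
    intro t
    have e1 : Complex.exp (Complex.I * l * ((x:ℂ) + (t:ℂ))) =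
        Complex.exp (Complex.I * l * (x:ℂ)) * Complex.exp (Complex.I * l * (t:ℂ)) := by
      rw [← Complex.exp_add]; congr 1; ring
    have e2 : Complex.exp (Complex.I * μ * (t:ℂ)) =
        Complex.exp (Complex.I * l * (t:ℂ)) * Complex.exp (Complex.I * (μ - l) * (t:ℂ)) := by
      rw [← Complex.exp_add]; congr 1; ring
    rw [e1, e2]
    field_simp
  -- derivative of the parametric integral
  have hder : ∀ s : ℝ, deriv (fun t : ℝ => ∫ ξ in t..x,
      Complex.exp (Complex.I * l * ((x - ξ + t : ℝ):ℂ)) / Delta b σ l *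
        Complex.exp (Complex.I * μ * (ξ:ℂ))) s =
      Complex.I * l * Complex.exp (Complex.I * l * (s:ℂ)) *
        (Complex.exp (Complex.I * l * (x:ℂ)) * Complex.exp (Complex.I * (μ - l) * (x:ℂ)) /
          (Delta b σ l * (Complex.I * (μ - l)))) -
      Complex.I * μ * Complex.exp (Complex.I * μ * (s:ℂ)) *
        (Complex.exp (Complex.I * l * (x:ℂ)) / (Delta b σ l * (Complex.I * (μ - l)))) := by
    intro s
    have hFeq : (fun t : ℝ => ∫ ξ in t..x,
        Complex.exp (Complex.I * l * ((x - ξ + t : ℝ):ℂ)) / Delta b σ l *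
          Complex.exp (Complex.I * μ * (ξ:ℂ))) =
        fun t : ℝ => Complex.exp (Complex.I * l * (t:ℂ)) *
          (Complex.exp (Complex.I * l * (x:ℂ)) * Complex.exp (Complex.I * (μ - l) * (x:ℂ)) /
            (Delta b σ l * (Complex.I * (μ - l)))) -
        Complex.exp (Complex.I * μ * (t:ℂ)) *
          (Complex.exp (Complex.I * l * (x:ℂ)) / (Delta b σ l * (Complex.I * (μ - l)))) :=
      funext fun t => (hint t).trans (hG t)
    rw [hFeq]
    exact (((hasDerivAt_cexp_mul (Complex.I * l) s).mul_const _).sub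
      ((hasDerivAt_cexp_mul (Complex.I * μ) s).mul_const _)).deriv
  -- integrability of exp·conj σ
  have hil : ∀ c : ℂ, IntervalIntegrable
      (fun s : ℝ => Complex.exp (c * (s:ℂ)) * (starRingEnd ℂ) (σ s)) volume 0 b :=
    fun c => hσi.continuousOn_mul (cexp_cont c).continuousOn
  -- second integral
  have hInt2 : (∫ s in (0:ℝ)..b, (starRingEnd ℂ) (σ s) *
      (Complex.I * l * Complex.exp (Complex.I * l * (s:ℂ)) *
        (Complex.exp (Complex.I * l * (x:ℂ)) * Complex.exp (Complex.I * (μ - l) * (x:ℂ)) /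
          (Delta b σ l * (Complex.I * (μ - l)))) -
      Complex.I * μ * Complex.exp (Complex.I * μ * (s:ℂ)) *
        (Complex.exp (Complex.I * l * (x:ℂ)) / (Delta b σ l * (Complex.I * (μ - l)))))) =
      Complex.I * l * (Complex.exp (Complex.I * l * (x:ℂ)) * Complex.exp (Complex.I * (μ - l) * (x:ℂ)) /
          (Delta b σ l * (Complex.I * (μ - l)))) *
        (∫ s in (0:ℝ)..b, Complex.exp (Complex.I * l * (s:ℂ)) * (starRingEnd ℂ) (σ s)) -
      Complex.I * μ * (Complex.exp (Complex.I * l * (x:ℂ)) / (Delta b σ l * (Complex.I * (μ - l)))) *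
        (∫ s in (0:ℝ)..b, Complex.exp (Complex.I * μ * (s:ℂ)) * (starRingEnd ℂ) (σ s)) := by
    rw [← intervalIntegral.integral_const_mul, ← intervalIntegral.integral_const_mul,
      ← intervalIntegral.integral_sub (((hil (Complex.I * l))).const_mul _)
        ((hil (Complex.I * μ)).const_mul _)]
    apply intervalIntegral.integral_congr
    intro s _
    dsimp only
    ring
  -- assemble
  simp only [conv]
  simp only [hder]
  rw [hT1, hInt2]
  have e3 : Complex.exp (Complex.I * μ * (x:ℂ)) =
      Complex.exp (Complex.I * l * (x:ℂ)) * Complex.exp (Complex.I * (μ - l) * (x:ℂ)) := by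
    rw [← Complex.exp_add]; congr 1; ring
  have hDl : Delta b σ l = 1 - l * ∫ s in (0:ℝ)..b,
      Complex.exp (Complex.I * l * (s:ℂ)) * (starRingEnd ℂ) (σ s) := rfl
  have hDμ : Delta b σ μ = 1 - μ * ∫ s in (0:ℝ)..b,
      Complex.exp (Complex.I * μ * (s:ℂ)) * (starRingEnd ℂ) (σ s) := rfl
  rw [e3]
  rw [hDl] at hD ⊢
  rw [hDμ]
  field_simp
  ring

lemma sigma_conj_int (b : ℝ) (hb : 0 ≤ b) (σ : ℝ → ℂ) (hσ : MemL2 b σ) :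
    IntervalIntegrable (fun s => (starRingEnd ℂ) (σ s)) volume 0 b := by
  have hi : Integrable σ (volume.restrict (Set.Ioc (0:ℝ) b)) := hσ.integrable one_le_two
  have h2 : Integrable (fun s => (starRingEnd ℂ) (σ s)) (volume.restrict (Set.Ioc (0:ℝ) b)) := by
    refine hi.norm.mono' (Complex.continuous_conj.comp_aestronglyMeasurable hσ.aestronglyMeasurable) ?_
    filter_upwards with s
    simp
  exact (intervalIntegrable_iff_integrableOn_Ioc_of_le hb).mpr h2

lemma continuous_Delta (b : ℝ) (hb : 0 ≤ b) (σ : ℝ → ℂ) (hσ : MemL2 b σ) :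
    Continuous (Delta b σ) := by
  have hσm : AEStronglyMeasurable (fun s => (starRingEnd ℂ) (σ s))
      (volume.restrict (Set.uIoc (0:ℝ) b)) := by
    rw [Set.uIoc_of_le hb]
    exact Complex.continuous_conj.comp_aestronglyMeasurable hσ.aestronglyMeasurable
  have hσn : IntervalIntegrable (fun s => ‖σ s‖) volume 0 b :=
    (intervalIntegrable_iff_integrableOn_Ioc_of_le hb).mpr (hσ.integrable one_le_two).norm
  rw [continuous_iff_continuousAt]
  intro l₀
  have hK : ContinuousAt (fun l : ℂ => ∫ s in (0:ℝ)..b,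
      Complex.exp (Complex.I * l * (s:ℂ)) * (starRingEnd ℂ) (σ s)) l₀ := by
    apply intervalIntegral.continuousAt_of_dominated_interval
      (bound := fun s => Real.exp ((‖l₀‖ + 1) * b) * ‖σ s‖)
    · filter_upwards with l
      exact ((cexp_cont (Complex.I * l)).aestronglyMeasurable).mul hσm
    · filter_upwards [Metric.ball_mem_nhds l₀ one_pos] with l hl
      filter_upwards with s hs
      rw [Set.uIoc_of_le hb] at hs
      have h0s : 0 ≤ s := hs.1.le
      have hsb : s ≤ b := hs.2
      have hdist : ‖l - l₀‖ < 1 := by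
        have := Metric.mem_ball.mp hl
        rwa [Complex.dist_eq] at this
      have hlb : ‖l‖ ≤ ‖l₀‖ + 1 := by
        have h2 : ‖l‖ - ‖l₀‖ ≤ ‖l - l₀‖ := by
          simpa using norm_sub_norm_le l l₀
        linarith
      have hre : (Complex.I * l * (s:ℂ)).re = -l.im * s := by
        simp [Complex.mul_re, Complex.mul_im]
      have him : |l.im| ≤ ‖l‖ := Complex.abs_im_le_norm l
      have hexp : ‖Complex.exp (Complex.I * l * (s:ℂ))‖ ≤
          Real.exp ((‖l₀‖ + 1) * b) := by
        rw [Complex.norm_exp, hre]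
        apply Real.exp_le_exp.mpr
        have h3 : -l.im ≤ ‖l₀‖ + 1 := by
          have := abs_le.mp (him.trans hlb : |l.im| ≤ ‖l₀‖ + 1)
          linarith [this.1]
        have h4 : (0:ℝ) ≤ ‖l₀‖ + 1 := by positivity
        nlinarith
      calc ‖Complex.exp (Complex.I * l * (s:ℂ)) * (starRingEnd ℂ) (σ s)‖
          = ‖Complex.exp (Complex.I * l * (s:ℂ))‖ * ‖σ s‖ := by
            simp
        _ ≤ Real.exp ((‖l₀‖ + 1) * b) * ‖σ s‖ :=
            mul_le_mul_of_nonneg_right hexp (norm_nonneg _)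
    · exact hσn.const_mul _
    · filter_upwards with s _
      exact (((Complex.continuous_exp.comp
        (((continuous_const.mul continuous_id).mul continuous_const)))).mul
          continuous_const).continuousAt
  exact continuousAt_const.sub (continuousAt_id.mul hK)

end St17

/-- the Sedletskiy remainder formula for `f(x) = e^{iμx}`:
`S_R(e^{iμ·};x) - e^{iμx} = (Δ(μ)/2πi) ∮_{|λ|=R} (e^{iλx}/Δ(λ)) dλ/(μ-λ)`. -/
theorem statement17 (b : ℝ) (hb : 0 < b) (σ : ℝ → ℂ) (hσ : MemL2 b σ)
    (R : ℝ) (hR : 0 < R) (hΔR : ∀ l : ℂ, ‖l‖ = R → Delta b σ l ≠ 0)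
    (μ : ℂ) (hμ : ‖μ‖ < R)
    (S : ℝ → ℂ)
    (hS : S = fun x : ℝ => -(1 / (2 * Real.pi * Complex.I)) *
      ∮ l in C(0, R), conv b σ
        (fun t : ℝ => Complex.exp (Complex.I * l * (t:ℂ)) / Delta b σ l)
        (fun t : ℝ => Complex.exp (Complex.I * μ * (t:ℂ))) x) :
    ∀ x : ℝ, S x - Complex.exp (Complex.I * μ * (x:ℂ)) =
      Delta b σ μ / (2 * Real.pi * Complex.I) *
        ∮ l in C(0, R), Complex.exp (Complex.I * l * (x:ℂ)) / Delta b σ l / (μ - l) := by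
  intro x
  have hσi := St17.sigma_conj_int b hb.le σ hσ
  have habs : ∀ l ∈ Metric.sphere (0:ℂ) R, ‖l‖ = R := by
    intro l hl
    simpa [Complex.dist_eq] using hl
  have hnel : ∀ l ∈ Metric.sphere (0:ℂ) R, μ ≠ l := by
    intro l hl h
    rw [h, habs l hl] at hμ
    exact lt_irrefl _ hμ
  have hsub : ∀ l ∈ Metric.sphere (0:ℂ) R, μ - l ≠ 0 :=
    fun l hl => sub_ne_zero.mpr (hnel l hl)
  have key : Set.EqOn
      (fun l : ℂ => conv b σ
        (fun t : ℝ => Complex.exp (Complex.I * l * (t:ℂ)) / Delta b σ l)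
        (fun t : ℝ => Complex.exp (Complex.I * μ * (t:ℂ))) x)
      (fun l : ℂ => Complex.exp (Complex.I * μ * (x:ℂ)) * (μ - l)⁻¹ -
        Delta b σ μ * (Complex.exp (Complex.I * l * (x:ℂ)) / Delta b σ l / (μ - l)))
      (Metric.sphere (0:ℂ) R) := by
    intro l hl
    exact St17.conv_eval b σ hσi l μ (hΔR l (habs l hl)) (hnel l hl) x
  rw [hS]
  simp only []
  rw [circleIntegral.integral_congr hR.le key]
  have hint1 : CircleIntegrable
      (fun l : ℂ => Complex.exp (Complex.I * μ * (x:ℂ)) * (μ - l)⁻¹) 0 R := by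
    apply ContinuousOn.circleIntegrable hR.le
    exact continuousOn_const.mul (ContinuousOn.inv₀
      ((continuous_const.sub continuous_id).continuousOn) hsub)
  have hint2 : CircleIntegrable
      (fun l : ℂ => Delta b σ μ *
        (Complex.exp (Complex.I * l * (x:ℂ)) / Delta b σ l / (μ - l))) 0 R := by
    apply ContinuousOn.circleIntegrable hR.le
    apply continuousOn_const.mul
    apply ContinuousOn.div
    · apply ContinuousOn.div
      · exact (Complex.continuous_exp.comp
          ((continuous_const.mul continuous_id).mul continuous_const)).continuousOn
      · exact (St17.continuous_Delta b hb.le σ hσ).continuousOn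
      · exact fun l hl => hΔR l (habs l hl)
    · exact (continuous_const.sub continuous_id).continuousOn
    · exact hsub
  rw [circleIntegral.integral_sub hint1 hint2, circleIntegral.integral_const_mul,
    circleIntegral.integral_const_mul]
  have hcirc : (∮ l in C(0, R), (μ - l)⁻¹) = -(2 * Real.pi * Complex.I) := by
    have hmem : μ ∈ Metric.ball (0:ℂ) R := by
      simpa [Complex.dist_eq] using hμ
    have h2 := circleIntegral.integral_sub_inv_of_mem_ball hmem
    have h3 : (fun l : ℂ => (μ - l)⁻¹) = fun l : ℂ => (-1 : ℂ) * (l - μ)⁻¹ := by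
      funext l
      rw [neg_one_mul, ← inv_neg, neg_sub]
    rw [h3, circleIntegral.integral_const_mul, h2]
    ring
  rw [hcirc]
  have hπ : (2 * (Real.pi:ℂ) * Complex.I) ≠ 0 := by
    simp [Real.pi_ne_zero, Complex.I_ne_zero, Complex.ofReal_ne_zero]
  field_simp
  ring
end
end
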